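/- Let (G, rk) be an SRTI instance with vertex set V(G) = {v_1, …, v_n}, and let k be an integer such that every stable matching of G leaves at least k vertices uncovered. Let G' arise from G by adding k new vertices x_1, …, x_k, each adjacent to all vertices of G (and to no other x-vertex), with ranks rk_{x_i}(v_j) = j for all i ∈ [k], j ∈ [n], and rk_{v}(x_i) = (max over w ∈ N_G(v) of rk_v(w)) + i for every v ∈ V(G) and i ∈ [k]. Then G' has a perfect stable matching if and only if G has a stable matching of size (n − k)/2. -/

import Mathlib

open scoped Classical

noncomputable section

/-- A matching of a graph `G`, given by the partner function: `partner v = v` means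
that `v` is unmatched, and otherwise `v` is matched to `partner v`, which must be one
of its neighbours in the acceptability graph `G`. -/
structure Matching {V : Type} (G : SimpleGraph V) where
  partner : V → V
  involutive : ∀ v, partner (partner v) = v
  adj_of_ne : ∀ v, partner v ≠ v → G.Adj v (partner v)

/-- The set of edges of a matching. -/
def Matching.edgeSet {V : Type} {G : SimpleGraph V} (M : Matching G) : Set (Sym2 V) :=
  {e | ∃ v, M.partner v ≠ v ∧ e = s(v, M.partner v)}

/-- The pair `{v, w}` is blocking for the matching `M` (with respect to the rank
functions `rk`, where `rk v w = ⊤` encodes that `v` prefers any acceptable partner to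
`w`; in particular `rk v v = ⊤`, so that an unmatched agent prefers every neighbour to
staying alone): `v` and `w` are adjacent, and each strictly prefers the other to its
current situation. -/
def IsBlocking {V : Type} (G : SimpleGraph V) (rk : V → V → ℕ∞) (M : Matching G)
    (v w : V) : Prop :=
  G.Adj v w ∧ rk v w < rk v (M.partner v) ∧ rk w v < rk w (M.partner w)

/-- A matching is stable if no edge of `G` is blocking. -/
def Stable {V : Type} (G : SimpleGraph V) (rk : V → V → ℕ∞) (M : Matching G) : Prop :=
  ∀ v w : V, ¬ IsBlocking G rk M v w
/-- The graph `G'` obtained from `G` by adding `k` new vertices, each adjacent to every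
vertex of `G` and to no other new vertex. -/
def augGraph {V : Type} (G : SimpleGraph V) (k : ℕ) : SimpleGraph (V ⊕ Fin k) where
  Adj a b :=
    match a, b with
    | Sum.inl v, Sum.inl w => G.Adj v w
    | Sum.inl _, Sum.inr _ => True
    | Sum.inr _, Sum.inl _ => True
    | Sum.inr _, Sum.inr _ => False
  symm := by
    constructor
    rintro (v | i) (w | j) h
    · exact G.adj_symm h
    · trivial
    · trivial
    · exact h
  loopless := by
    constructor
    rintro (v | i) h
    · exact G.irrefl h
    · exact h

/-- The rank of the best-ranked neighbour... rather: the worst (largest) rank that `v`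
assigns to its neighbours in `G`. -/
def maxRank {V : Type} (G : SimpleGraph V) (rk : V → V → ℕ∞) (v : V) : ℕ∞ :=
  ⨆ w ∈ G.neighborSet v, rk v w

/-- The rank functions of the augmented instance: the new vertex `x_i` ranks `v_j` at
position `j` (where `v_j` is the `j`-th vertex in the given enumeration `idx`), and
every old vertex `v` ranks `x_i` at position `α_v + i`, where `α_v` is the largest rank
`v` assigns to a neighbour in `G`.  (Non-adjacent pairs, and a vertex with itself,
get rank `⊤`.) -/
def augRank {V : Type} [Fintype V] (G : SimpleGraph V) (rk : V → V → ℕ∞) (k : ℕ)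
    (idx : V ≃ Fin (Fintype.card V)) : (V ⊕ Fin k) → (V ⊕ Fin k) → ℕ∞
  | Sum.inl v, Sum.inl w => rk v w
  | Sum.inl v, Sum.inr i => maxRank G rk v + ((i : ℕ) + 1 : ℕ)
  | Sum.inr _, Sum.inl v => (((idx v : ℕ) + 1 : ℕ) : ℕ∞)
  | Sum.inr _, Sum.inr _ => ⊤

-- auxiliary: covered vertices count = 2 * number of edges
lemma Matching.covered_ncard {V : Type} [Fintype V] {G : SimpleGraph V} (M : Matching G) :
    {v : V | M.partner v ≠ v}.ncard = 2 * M.edgeSet.ncard := by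
  classical
  have hS : ({v : V | M.partner v ≠ v} : Set V).Finite := Set.toFinite _
  have hE : (M.edgeSet : Set (Sym2 V)).Finite := Set.toFinite _
  rw [Set.ncard_eq_toFinset_card _ hS, Set.ncard_eq_toFinset_card _ hE]
  set S := hS.toFinset with hSdef
  set E := hE.toFinset with hEdef
  have hmem : ∀ v ∈ S, s(v, M.partner v) ∈ E := by
    intro v hv
    rw [hSdef, Set.Finite.mem_toFinset] at hv
    rw [hEdef, Set.Finite.mem_toFinset]
    exact ⟨v, hv, rfl⟩
  rw [Finset.card_eq_sum_card_fiberwise hmem]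
  have hfib : ∀ e ∈ E, (S.filter (fun v => s(v, M.partner v) = e)).card = 2 := by
    intro e he
    rw [hEdef, Set.Finite.mem_toFinset] at he
    obtain ⟨a, ha, rfl⟩ := he
    have hfil : S.filter (fun v => s(v, M.partner v) = s(a, M.partner a)) = {a, M.partner a} := by
      ext v
      rw [Finset.mem_filter, hSdef, Set.Finite.mem_toFinset, Finset.mem_insert,
        Finset.mem_singleton]
      constructor
      · rintro ⟨hv, heq⟩
        rw [Sym2.eq_iff] at heq
        rcases heq with ⟨h1, _⟩ | ⟨h1, _⟩
        · exact Or.inl h1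
        · exact Or.inr h1
      · rintro (rfl | rfl)
        · exact ⟨ha, rfl⟩
        · refine ⟨?_, ?_⟩
          · show M.partner (M.partner a) ≠ M.partner a
            rw [M.involutive]
            exact fun h => ha h.symm
          · show s(M.partner a, M.partner (M.partner a)) = _
            rw [M.involutive]
            exact Sym2.eq_swap
    rw [hfil, Finset.card_insert_of_notMem (by simpa using fun h => ha h.symm), Finset.card_singleton]
  rw [Finset.sum_congr rfl hfib, Finset.sum_const, smul_eq_mul, mul_comm]

lemma rk_le_maxRank {V : Type} {G : SimpleGraph V} {rk : V → V → ℕ∞} {v w : V}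
    (h : G.Adj v w) : rk v w ≤ maxRank G rk v :=
  le_iSup₂ (f := fun w (_ : w ∈ G.neighborSet v) => rk v w) w h

lemma rk_lt_maxRank_add {V : Type} {G : SimpleGraph V} {rk : V → V → ℕ∞} {v w : V}
    (h : G.Adj v w) (hfin : rk v w ≠ ⊤) (n : ℕ) :
    rk v w < maxRank G rk v + ((n + 1 : ℕ) : ℕ∞) := by
  have h1 : rk v w < rk v w + ((n + 1 : ℕ) : ℕ∞) := by
    nth_rewrite 1 [← add_zero (rk v w)]
    rw [ENat.add_lt_add_iff_left hfin]
    exact_mod_cast Nat.succ_pos n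
  exact lt_of_lt_of_le h1 (add_le_add_left (rk_le_maxRank h) _)

/-- Let `(G, rk)` be an SRTI instance on `n` vertices and `k` such
that every stable matching of `G` leaves at least `k` vertices uncovered.  Add `k` new
vertices adjacent to all old vertices, ranked and ranking as in `augRank`.  Then the
augmented instance has a perfect stable matching iff `G` has a stable matching of size
`(n − k)/2`. -/
theorem perfect_aug_iff_stable_of_size {V : Type} [Fintype V] [DecidableEq V]
    (G : SimpleGraph V) (rk : V → V → ℕ∞)
    (hself : ∀ v, rk v v = ⊤)
    (hfin : ∀ v w, G.Adj v w → rk v w ≠ ⊤)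
    (k : ℕ) (idx : V ≃ Fin (Fintype.card V))
    (hk : ∀ M : Matching G, Stable G rk M → k ≤ Set.ncard {v : V | M.partner v = v}) :
    (∃ M' : Matching (augGraph G k),
        Stable (augGraph G k) (augRank G rk k idx) M' ∧ ∀ x, M'.partner x ≠ x) ↔
    (∃ M : Matching G, Stable G rk M ∧
        (2 * M.edgeSet.ncard : ℤ) = (Fintype.card V : ℤ) - (k : ℤ)) := by
  constructor
  · rintro ⟨M', hstab, hperf⟩
    -- each added vertex is matched to an old vertex
    have hx : ∀ i : Fin k, ∃ v : V, M'.partner (Sum.inr i) = Sum.inl v := by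
      intro i
      cases h : M'.partner (Sum.inr i) with
      | inl v => exact ⟨v, rfl⟩
      | inr j =>
          exfalso
          have hadj := M'.adj_of_ne (Sum.inr i) (hperf _)
          rw [h] at hadj
          exact hadj
    -- restrict M' to V
    set p : V → V := fun v => Sum.elim id (fun _ => v) (M'.partner (Sum.inl v)) with hpdef
    have hp1 : ∀ v w, M'.partner (Sum.inl v) = Sum.inl w → p v = w := by
      intro v w h; simp [hpdef, h]
    have hp2 : ∀ v i, M'.partner (Sum.inl v) = Sum.inr i → p v = v := by
      intro v i h; simp [hpdef, h]
    have hinv : ∀ v, p (p v) = v := by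
      intro v
      cases h : M'.partner (Sum.inl v) with
      | inl w =>
          rw [hp1 v w h]
          have := M'.involutive (Sum.inl v)
          rw [h] at this
          exact hp1 w v this
      | inr i => rw [hp2 v i h, hp2 v i h]
    have hadj : ∀ v, p v ≠ v → G.Adj v (p v) := by
      intro v hne
      cases h : M'.partner (Sum.inl v) with
      | inl w =>
          have hw := hp1 v w h
          have := M'.adj_of_ne (Sum.inl v) (hperf _)
          rw [h] at this
          rw [hw]
          exact this
      | inr i => exact absurd (hp2 v i h) hne
    refine ⟨⟨p, hinv, hadj⟩, ?_, ?_⟩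
    · -- stability
      intro v w ⟨hvw, h1, h2⟩
      have key : ∀ a b : V, G.Adj a b → rk a b < rk a (p a) →
          rk a b < augRank G rk k idx (Sum.inl a) (M'.partner (Sum.inl a)) := by
        intro a b hab h
        cases hc : M'.partner (Sum.inl a) with
        | inl c => rw [hp1 a c hc] at h; exact h
        | inr i => exact rk_lt_maxRank_add hab (hfin a b hab) i
      exact hstab (Sum.inl v) (Sum.inl w) ⟨hvw, key v w hvw h1, key w v hvw.symm h2⟩
    · -- size
      set g : Fin k → V := fun i => (hx i).choose with hgdef
      have hg : ∀ i, M'.partner (Sum.inr i) = Sum.inl (g i) := fun i => (hx i).choose_spec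
      have hg' : ∀ i, M'.partner (Sum.inl (g i)) = Sum.inr i := by
        intro i
        have := M'.involutive (Sum.inr i)
        rw [hg i] at this
        exact this
      have hginj : Function.Injective g := by
        intro i j h
        have := hg' i
        rw [h, hg' j] at this
        exact (Sum.inr.inj this).symm
      have hset : {v : V | p v = v} = Set.range g := by
        ext v
        constructor
        · intro hv
          cases h : M'.partner (Sum.inl v) with
          | inl w =>
              exfalso
              have hw := hp1 v w h
              rw [Set.mem_setOf_eq] at hv
              rw [hv] at hw
              rw [hw] at h
              exact hperf _ h
          | inr i =>
              refine ⟨i, ?_⟩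
              have := M'.involutive (Sum.inl v)
              rw [h, hg i] at this
              exact Sum.inl.inj this
        · rintro ⟨i, rfl⟩
          exact hp2 (g i) i (hg' i)
      have huncov : {v : V | p v = v}.ncard = k := by
        rw [hset, ← Nat.card_coe_set_eq, Nat.card_range_of_injective hginj,
          Nat.card_eq_fintype_card, Fintype.card_fin]
      have hcov := Matching.covered_ncard ⟨p, hinv, hadj⟩
      have htot := Set.ncard_add_ncard_compl {v : V | p v ≠ v} (Set.toFinite _)
      have hcompl : ({v : V | p v ≠ v} : Set V)ᶜ = {v : V | p v = v} := by
        ext v; simp [Set.mem_compl_iff]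
      rw [hcompl, huncov, hcov, Nat.card_eq_fintype_card] at htot
      have : (Matching.edgeSet ⟨p, hinv, hadj⟩).ncard =
          (Matching.edgeSet (⟨p, hinv, hadj⟩ : Matching G)).ncard := rfl
      push_cast [← htot]
      ring
  · rintro ⟨M, hstab, hsize⟩
    -- the uncovered set has exactly k elements
    have hcov := M.covered_ncard
    have htot := Set.ncard_add_ncard_compl {v : V | M.partner v ≠ v} (Set.toFinite _)
    have hcompl : ({v : V | M.partner v ≠ v} : Set V)ᶜ = {v : V | M.partner v = v} := by
      ext v; simp
    rw [hcompl, hcov, Nat.card_eq_fintype_card] at htot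
    have hU : {v : V | M.partner v = v}.ncard = k := by
      have hz : (2 * M.edgeSet.ncard + {v : V | M.partner v = v}.ncard : ℤ)
          = (Fintype.card V : ℤ) := by exact_mod_cast htot
      omega
    set s : Finset (Fin (Fintype.card V)) :=
      (Set.toFinite {v : V | M.partner v = v}).toFinset.image idx with hsdef
    have hscard : s.card = k := by
      rw [hsdef, Finset.card_image_of_injective _ idx.injective,
        ← Set.ncard_eq_toFinset_card _ (Set.toFinite _), hU]
    set φ := s.orderIsoOfFin hscard with hphidef
    set u : Fin k → V := fun i => idx.symm (φ i) with hudef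
    have hu_idx : ∀ i, idx (u i) = (φ i : Fin (Fintype.card V)) := by
      intro i; simp [hudef]
    have hmem_iff : ∀ x : Fin (Fintype.card V), x ∈ s ↔ ∃ v, M.partner v = v ∧ idx v = x := by
      intro x
      rw [hsdef, Finset.mem_image]
      simp only [Set.Finite.mem_toFinset, Set.mem_setOf_eq]
    have hu_mem : ∀ i, M.partner (u i) = u i := by
      intro i
      obtain ⟨v, hv, hvi⟩ := (hmem_iff _).1 (φ i).2
      have hveq : v = u i := by
        rw [hudef]
        show v = idx.symm (φ i)
        rw [← hvi, idx.symm_apply_apply]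
      rwa [← hveq]
    have hmemS : ∀ v, M.partner v = v → idx v ∈ s := by
      intro v hv
      exact (hmem_iff _).2 ⟨v, hv, rfl⟩
    set q : V ⊕ Fin k → V ⊕ Fin k := Sum.elim
      (fun v => if h : M.partner v = v then Sum.inr (φ.symm ⟨idx v, hmemS v h⟩)
        else Sum.inl (M.partner v))
      (fun i => Sum.inl (u i)) with hqdef
    have hq1 : ∀ v (h : M.partner v = v),
        q (Sum.inl v) = Sum.inr (φ.symm ⟨idx v, hmemS v h⟩) := by
      intro v h; rw [hqdef]; simp only [Sum.elim_inl]; rw [dif_pos h]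
    have hq2 : ∀ v, M.partner v ≠ v → q (Sum.inl v) = Sum.inl (M.partner v) := by
      intro v h; rw [hqdef]; simp only [Sum.elim_inl]; rw [dif_neg h]
    have hq3 : ∀ i, q (Sum.inr i) = Sum.inl (u i) := fun i => rfl
    have hu_of : ∀ v (h : M.partner v = v), u (φ.symm ⟨idx v, hmemS v h⟩) = v := by
      intro v h
      rw [hudef]
      simp only [OrderIso.apply_symm_apply]
      exact idx.symm_apply_apply v
    have hjq : ∀ i, φ.symm ⟨idx (u i), hmemS _ (hu_mem i)⟩ = i := by
      intro i
      have : (⟨idx (u i), hmemS _ (hu_mem i)⟩ : {x // x ∈ s}) = φ i :=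
        Subtype.ext (hu_idx i)
      rw [this, OrderIso.symm_apply_apply]
    have hinv : ∀ a, q (q a) = a := by
      rintro (v | i)
      · by_cases h : M.partner v = v
        · rw [hq1 v h, hq3, hu_of v h]
        · rw [hq2 v h]
          have h2 : M.partner (M.partner v) ≠ M.partner v := by
            rw [M.involutive]; exact fun e => h e.symm
          rw [hq2 _ h2, M.involutive]
      · rw [hq3, hq1 _ (hu_mem i), hjq i]
    have hadj : ∀ a, q a ≠ a → (augGraph G k).Adj a (q a) := by
      rintro (v | i) hne
      · by_cases h : M.partner v = v
        · rw [hq1 v h]; trivial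
        · rw [hq2 v h]; exact M.adj_of_ne v h
      · rw [hq3 i]; trivial
    have hperf : ∀ a, q a ≠ a := by
      rintro (v | i)
      · by_cases h : M.partner v = v
        · rw [hq1 v h]; simp
        · rw [hq2 v h]; simpa using h
      · rw [hq3 i]; simp
    refine ⟨⟨q, hinv, hadj⟩, ?_, hperf⟩
    -- key claim handling old-new blocking pairs symmetrically
    have main : ∀ (v : V) (j : Fin k),
        ¬(augRank G rk k idx (Sum.inl v) (Sum.inr j)
            < augRank G rk k idx (Sum.inl v) (q (Sum.inl v)) ∧
          (((idx v : ℕ) + 1 : ℕ) : ℕ∞) < (((idx (u j) : ℕ) + 1 : ℕ) : ℕ∞)) := by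
      rintro v j ⟨h1, h2⟩
      have hlt2 : (idx v : ℕ) < (idx (u j) : ℕ) := by
        have : (idx v : ℕ) + 1 < (idx (u j) : ℕ) + 1 := by exact_mod_cast h2
        omega
      by_cases h : M.partner v = v
      · set jv := φ.symm ⟨idx v, hmemS v h⟩ with hjvdef
        rw [hq1 v h] at h1
        have h1' : maxRank G rk v + (((j : ℕ) + 1 : ℕ) : ℕ∞)
            < maxRank G rk v + (((jv : ℕ) + 1 : ℕ) : ℕ∞) := h1
        by_cases hmt : maxRank G rk v = ⊤
        · rw [hmt, top_add, top_add] at h1'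
          exact lt_irrefl _ h1'
        · have hjlt : (j : ℕ) + 1 < (jv : ℕ) + 1 := by
            exact_mod_cast (ENat.add_lt_add_iff_left hmt).1 h1'
          have hjlt' : j < jv := by
            rw [Fin.lt_def]; omega
          have hv : v = u jv := (hu_of v h).symm
          have hmono : (idx (u j) : Fin (Fintype.card V)) < idx (u jv) := by
            rw [hu_idx, hu_idx]
            exact_mod_cast φ.strictMono hjlt'
          rw [hv] at hlt2
          have : (idx (u j) : ℕ) < (idx (u jv) : ℕ) := hmono
          omega
      · rw [hq2 v h] at h1
        have h1' : maxRank G rk v + (((j : ℕ) + 1 : ℕ) : ℕ∞)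
            < rk v (M.partner v) := h1
        have hle : rk v (M.partner v) ≤ maxRank G rk v := rk_le_maxRank (M.adj_of_ne v h)
        exact absurd h1' (not_lt.2 (le_trans hle le_self_add))
    rintro (v | i) (w | j) ⟨hab, h1, h2⟩
    · -- old-old: blocking pair for M
      refine hstab v w ⟨hab, ?_, ?_⟩
      · by_cases h : M.partner v = v
        · rw [h, hself]
          exact lt_top_iff_ne_top.2 (hfin v w hab)
        · have h1' : rk v w < augRank G rk k idx (Sum.inl v) (q (Sum.inl v)) := h1
          rw [hq2 v h] at h1'
          exact h1'
      · by_cases h : M.partner w = w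
        · rw [h, hself]
          exact lt_top_iff_ne_top.2 (hfin w v hab.symm)
        · have h2' : rk w v < augRank G rk k idx (Sum.inl w) (q (Sum.inl w)) := h2
          rw [hq2 w h] at h2'
          exact h2'
    · -- old-new
      refine main v j ⟨h1, ?_⟩
      have h2' : (((idx v : ℕ) + 1 : ℕ) : ℕ∞)
          < augRank G rk k idx (Sum.inr j) (q (Sum.inr j)) := h2
      rw [hq3 j] at h2'
      exact h2'
    · -- new-old
      refine main w i ⟨h2, ?_⟩
      have h1' : (((idx w : ℕ) + 1 : ℕ) : ℕ∞)
          < augRank G rk k idx (Sum.inr i) (q (Sum.inr i)) := h1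
      rw [hq3 i] at h1'
      exact h1'
    · exact hab


end
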